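/- Let u ∈ Lip_c(ℝⁿ), u ≥ 0, Ω ⊂ ℝⁿ open with supp u ⊂ Ω, and for t ≥ 0 let N_t = { x : u(x) ≥ t }. Then ∫_0^∞ cap_Ω(N_t) d(t²) ≤ 4 ∫_Ω |∇u|² dx. -/

import Mathlib

open MeasureTheory

noncomputable section

/-- The closed cube with center `c` and edge length `d`, edges parallel to the axes. -/
def cube (n : ℕ) (c : Fin n → ℝ) (d : ℝ) : Set (Fin n → ℝ) :=
  {x | ∀ i, |x i - c i| ≤ d / 2}

/-- Wiener capacity of `F` relative to `Ω`. -/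
def capRel (n : ℕ) (Ω F : Set (Fin n → ℝ)) : ℝ :=
  sInf {e : ℝ | ∃ v : (Fin n → ℝ) → ℝ, (∃ K : NNReal, LipschitzWith K v) ∧
    HasCompactSupport v ∧ tsupport v ⊆ Ω ∧ (∀ x ∈ F, v x = 1) ∧
    e = ∫ x, ‖fderiv ℝ v x‖ ^ 2}

/-- Wiener capacity of a subset of `Q_d`: relative to `ℝⁿ` for `n ≥ 3`, and for `n = 2`
relative to the open concentric square of side `2d`. -/
def wcap (n : ℕ) (c : Fin n → ℝ) (d : ℝ) (F : Set (Fin n → ℝ)) : ℝ :=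
  if n = 2 then capRel n (interior (cube n c (2 * d))) F else capRel n Set.univ F

/-- The Molchanov functional `M_γ(Q_d; V)`. -/
def molch (n : ℕ) (c : Fin n → ℝ) (d γ : ℝ) (V : (Fin n → ℝ) → ℝ) : ℝ :=
  sInf {m : ℝ | ∃ F : Set (Fin n → ℝ), IsCompact F ∧ F ⊆ cube n c d ∧
    wcap n c d F ≤ γ * wcap n c d (cube n c d) ∧ m = ∫ x in cube n c d \ F, V x}

/-- Squared pointwise norm of the magnetic gradient `∇_a u = ∇u + i a u`. -/
def magGradSq (n : ℕ) (a : (Fin n → ℝ) → Fin n → ℝ) (u : (Fin n → ℝ) → ℂ)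
    (x : Fin n → ℝ) : ℝ :=
  ∑ j, ‖fderiv ℝ u x (Pi.single j 1) + Complex.I * (a x j : ℂ) * u x‖ ^ 2


lemma min_lip_aux {a b t : ℝ} (ha : 0 ≤ a) (hb : 0 ≤ b) (ht : 0 < t) :
    |min (a ^ 2 / t ^ 2) 1 - min (b ^ 2 / t ^ 2) 1| ≤ 2 / t * |a - b| := by
  have ht2 : (0:ℝ) < t ^ 2 := by positivity
  have hmin : ∀ c : ℝ, 0 ≤ c → min (c ^ 2 / t ^ 2) 1 = (min c t) ^ 2 / t ^ 2 := by
    intro c hc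
    rcases le_total c t with h | h
    · rw [min_eq_left h, min_eq_left ((div_le_one ht2).mpr (by nlinarith))]
    · rw [min_eq_right h, min_eq_right ((one_le_div ht2).mpr (by nlinarith)),
        div_self (ne_of_gt ht2)]
  have claim : ∀ x y : ℝ, min x t - min y t ≤ |x - y| := by
    intro x y
    rcases le_total y t with h | h
    · rw [min_eq_left h]
      exact le_trans (sub_le_sub_right (min_le_left x t) y) (le_abs_self _)
    · rw [min_eq_right h]
      exact le_trans (sub_nonpos.mpr (min_le_right x t)) (abs_nonneg _)
  have hpq : |min a t - min b t| ≤ |a - b| :=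
    abs_sub_le_iff.mpr ⟨claim a b, by rw [abs_sub_comm]; exact claim b a⟩
  have h1 : |(min a t) ^ 2 - (min b t) ^ 2| ≤ 2 * t * |a - b| := by
    have hfac : (min a t) ^ 2 - (min b t) ^ 2
        = (min a t + min b t) * (min a t - min b t) := by ring
    rw [hfac, abs_mul]
    have h2 : |min a t + min b t| ≤ 2 * t := by
      rw [abs_of_nonneg (by
        have h3 : (0:ℝ) ≤ min a t := le_min ha ht.le
        have h4 : (0:ℝ) ≤ min b t := le_min hb ht.le
        linarith)]
      have h5 := min_le_right a t
      have h6 := min_le_right b t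
      linarith
    exact mul_le_mul h2 hpq (abs_nonneg _) (by positivity)
  rw [hmin a ha, hmin b hb, div_sub_div_same, abs_div, abs_of_pos ht2, div_le_iff₀ ht2]
  have heq : 2 / t * |a - b| * t ^ 2 = 2 * t * |a - b| := by
    field_simp
  linarith


lemma fderiv_vt_bound {n : ℕ} {u : (Fin n → ℝ) → ℝ}
    (hcont : Continuous u)
    (hpos : ∀ x, 0 ≤ u x) {t : ℝ} (ht : 0 < t) (x : Fin n → ℝ) :
    ‖fderiv ℝ (fun y => min (u y ^ 2 / t ^ 2) 1) x‖ ^ 2 ≤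
      Set.indicator {y | u y < t} (fun y => (2 * u y / t ^ 2) ^ 2 * ‖fderiv ℝ u y‖ ^ 2) x := by
  have ht2 : (0:ℝ) < t ^ 2 := by positivity
  rcases lt_trichotomy (u x) t with hx | hx | hx
  · -- u x < t
    have hxmem : x ∈ {y | u y < t} := hx
    have hU : IsOpen {y | u y < t} := isOpen_lt hcont continuous_const
    have hev : (fun y => min (u y ^ 2 / t ^ 2) 1) =ᶠ[nhds x] (fun y => u y ^ 2 / t ^ 2) := by
      filter_upwards [hU.mem_nhds hxmem] with y hy
      have hy' : u y < t := hy
      have : u y ^ 2 / t ^ 2 ≤ 1 := (div_le_one ht2).mpr (by nlinarith [hpos y])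
      exact min_eq_left this
    rw [hev.fderiv_eq, Set.indicator_of_mem hxmem]
    by_cases hd : DifferentiableAt ℝ u x
    · have h1 : HasFDerivAt (fun y => u y ^ 2 / t ^ 2)
          ((2 * u x / t ^ 2) • fderiv ℝ u x) x := by
        have h2 := (hd.hasFDerivAt.mul hd.hasFDerivAt).const_mul ((t ^ 2)⁻¹)
        have h3 : (fun y => (t ^ 2)⁻¹ * (u y * u y)) = fun y => u y ^ 2 / t ^ 2 := by
          funext y; field_simp
        simp only [Pi.mul_apply] at h2
        rw [h3] at h2
        refine h2.congr_fderiv ?_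
        ext z
        simp [ContinuousLinearMap.smul_apply]
        ring
      rw [h1.fderiv]
      rw [norm_smul, Real.norm_eq_abs]
      rw [mul_pow, sq_abs]
    · rcases eq_or_lt_of_le (hpos x) with h0 | h0
      · have hmin' : IsLocalMin (fun y => u y ^ 2 / t ^ 2) x := by
          apply Filter.Eventually.of_forall
          intro y
          simp only
          rw [← h0]
          simp
          positivity
        rw [hmin'.fderiv_eq_zero]
        simp [← h0]
      · have hnd : ¬ DifferentiableAt ℝ (fun y => u y ^ 2 / t ^ 2) x := by
          intro h
        -- then u = sqrt (t^2 * (u^2/t^2)) would be differentiable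
          apply hd
          have hrepr : u = fun y => Real.sqrt (t ^ 2 * (u y ^ 2 / t ^ 2)) := by
            funext y
            rw [mul_div_cancel₀ _ (ne_of_gt ht2), Real.sqrt_sq (hpos y)]
          rw [hrepr]
          have hz : t ^ 2 * (u x ^ 2 / t ^ 2) ≠ 0 := by
            rw [mul_div_cancel₀ _ (ne_of_gt ht2)]
            positivity
          exact (Real.hasDerivAt_sqrt hz).differentiableAt.comp x (h.const_mul (t ^ 2))
        rw [fderiv_zero_of_not_differentiableAt hnd]
        simp
        positivity
  · -- u x = t : global max of v
    have hmax : IsLocalMax (fun y => min (u y ^ 2 / t ^ 2) 1) x := by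
      apply Filter.Eventually.of_forall
      intro y
      simp only
      have : min (u x ^ 2 / t ^ 2) 1 = 1 := by
        rw [hx, div_self (ne_of_gt ht2)]
        simp
      rw [this]
      exact min_le_right _ _
    rw [hmax.fderiv_eq_zero, Set.indicator_of_notMem (by simp [hx])]
    simp
  · -- u x > t : v = 1 near x
    have hU : IsOpen {y | t < u y} := isOpen_lt continuous_const hcont
    have hev : (fun y => min (u y ^ 2 / t ^ 2) 1) =ᶠ[nhds x] (fun _ => (1:ℝ)) := by
      filter_upwards [hU.mem_nhds hx] with y hy
      have hy' : t < u y := hy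
      exact min_eq_right ((one_le_div ht2).mpr (by nlinarith))
    rw [hev.fderiv_eq, fderiv_fun_const, Set.indicator_of_notMem (by simp; linarith)]
    simp


lemma lintegral_Ioi_ofReal_two_div_cube {a : ℝ} (ha : 0 < a) :
    ∫⁻ s in Set.Ioi a, ENNReal.ofReal (2 / s ^ 3) = ENNReal.ofReal (1 / a ^ 2) := by
  have heqon : Set.EqOn (fun s : ℝ => 2 * s ^ (-3 : ℝ)) (fun s : ℝ => 2 / s ^ 3)
      (Set.Ioi a) := by
    intro s hs
    have hs' : 0 < s := ha.trans hs
    simp only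
    rw [Real.rpow_neg hs'.le, show ((3:ℝ)) = ((3:ℕ):ℝ) by norm_num, Real.rpow_natCast,
      div_eq_mul_inv]
  have hint : IntegrableOn (fun s : ℝ => 2 / s ^ 3) (Set.Ioi a) := by
    have h1 : IntegrableOn (fun s : ℝ => 2 * s ^ (-3 : ℝ)) (Set.Ioi a) :=
      (integrableOn_Ioi_rpow_of_lt (by norm_num) ha).const_mul 2
    exact h1.congr_fun heqon measurableSet_Ioi
  have hval : ∫ s in Set.Ioi a, 2 / s ^ 3 = 1 / a ^ 2 := by
    have hpow : a ^ ((-3:ℝ) + 1) = (a ^ 2)⁻¹ := by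
      rw [show (-3:ℝ) + 1 = -2 by norm_num, Real.rpow_neg ha.le,
        show ((2:ℝ)) = ((2:ℕ):ℝ) by norm_num, Real.rpow_natCast]
    calc ∫ s in Set.Ioi a, 2 / s ^ 3
        = ∫ s in Set.Ioi a, 2 * s ^ (-3 : ℝ) :=
          (setIntegral_congr_fun measurableSet_Ioi heqon).symm
      _ = 2 * ∫ s in Set.Ioi a, s ^ (-3 : ℝ) := integral_const_mul 2 _
      _ = 2 * (-a ^ ((-3:ℝ) + 1) / ((-3:ℝ) + 1)) := by
          rw [integral_Ioi_rpow_of_lt (by norm_num) ha]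
      _ = 1 / a ^ 2 := by
          rw [hpow]
          have : a ^ 2 ≠ 0 := by positivity
          field_simp
          ring
  have hnn : 0 ≤ᵐ[volume.restrict (Set.Ioi a)] fun s : ℝ => 2 / s ^ 3 :=
    (ae_restrict_iff' measurableSet_Ioi).mpr (Filter.Eventually.of_forall fun s hs => by
      have hs' : 0 < s := ha.trans hs
      positivity)
  rw [← ofReal_integral_eq_lintegral_ofReal hint hnn, hval]

/-- capacitary strong-type inequality (Maz'ya, Theorem 2.3.1). -/
theorem capacitary_strong_type (n : ℕ) (Ω : Set (Fin n → ℝ)) (hΩ : IsOpen Ω)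
    (u : (Fin n → ℝ) → ℝ) (K : NNReal) (hu : LipschitzWith K u)
    (hcs : HasCompactSupport u) (hsupp : tsupport u ⊆ Ω) (hpos : ∀ x, 0 ≤ u x) :
    ∫ t in Set.Ioi (0 : ℝ), 2 * t * capRel n Ω {x | t ≤ u x} ≤
      4 * ∫ x in Ω, ‖fderiv ℝ u x‖ ^ 2 := by
  classical
  have hcont : Continuous u := hu.continuous
  have hEmeas : Measurable fun x => ‖fderiv ℝ u x‖ ^ 2 :=
    ((measurable_fderiv ℝ u).norm).pow_const 2
  have hWmeas : Measurable fun x => 4 * u x ^ 2 * ‖fderiv ℝ u x‖ ^ 2 :=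
    (((hcont.measurable).pow_const 2).const_mul 4).mul hEmeas
  have hKnorm : ∀ x, ‖fderiv ℝ u x‖ ≤ (K : ℝ) := fun x => norm_fderiv_le_of_lipschitz ℝ hu
  obtain ⟨M, hM⟩ := hcs.exists_bound_of_continuous hcont
  have htsm : MeasurableSet (tsupport u) := (isClosed_tsupport u).measurableSet
  have hfin : volume (tsupport u) ≠ ⊤ := hcs.measure_lt_top.ne
  -- integrability of |∇u|²
  have hE_int : Integrable (fun x => ‖fderiv ℝ u x‖ ^ 2) := by
    have hind : (fun x => ‖fderiv ℝ u x‖ ^ 2)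
        = Set.indicator (tsupport u) (fun x => ‖fderiv ℝ u x‖ ^ 2) := by
      symm
      apply Set.indicator_eq_self.mpr
      intro x hx
      simp only [Function.mem_support] at hx
      have h1 : fderiv ℝ u x ≠ 0 := by
        intro h
        exact hx (by simp [h])
      exact support_fderiv_subset ℝ (Function.mem_support.mpr h1)
    rw [hind, integrable_indicator_iff htsm]
    apply Measure.integrableOn_of_bounded hfin hEmeas.aestronglyMeasurable (M := (K:ℝ) ^ 2)
    apply Filter.Eventually.of_forall
    intro x
    rw [Real.norm_eq_abs, abs_of_nonneg (by positivity)]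
    exact pow_le_pow_left₀ (norm_nonneg _) (hKnorm x) 2
  have hW_nonneg : ∀ x, 0 ≤ 4 * u x ^ 2 * ‖fderiv ℝ u x‖ ^ 2 := fun x => by positivity
  -- integrability of W
  have hW_int : Integrable (fun x => 4 * u x ^ 2 * ‖fderiv ℝ u x‖ ^ 2) := by
    have hind : (fun x => 4 * u x ^ 2 * ‖fderiv ℝ u x‖ ^ 2)
        = Set.indicator (tsupport u) (fun x => 4 * u x ^ 2 * ‖fderiv ℝ u x‖ ^ 2) := by
      symm
      apply Set.indicator_eq_self.mpr
      intro x hx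
      apply subset_tsupport u
      simp only [Function.mem_support] at hx ⊢
      intro h
      exact hx (by simp [h])
    rw [hind, integrable_indicator_iff htsm]
    apply Measure.integrableOn_of_bounded hfin hWmeas.aestronglyMeasurable
      (M := 4 * M ^ 2 * (K:ℝ) ^ 2)
    apply Filter.Eventually.of_forall
    intro x
    rw [Real.norm_eq_abs, abs_of_nonneg (hW_nonneg x)]
    have h1 : u x ^ 2 ≤ M ^ 2 := by
      have := hM x
      rw [Real.norm_eq_abs] at this
      nlinarith [abs_nonneg (u x), sq_abs (u x)]
    have h2 : ‖fderiv ℝ u x‖ ^ 2 ≤ (K:ℝ) ^ 2 := by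
      nlinarith [norm_nonneg (fderiv ℝ u x), hKnorm x]
    nlinarith [norm_nonneg (fderiv ℝ u x), sq_nonneg (u x)]
  have hsetS : ∀ t : ℝ, MeasurableSet {y | u y < t} := fun t =>
    measurableSet_lt hcont.measurable measurable_const
  -- capacity bounds
  have hcap_nonneg : ∀ F : Set (Fin n → ℝ), 0 ≤ capRel n Ω F := by
    intro F
    apply Real.sInf_nonneg
    rintro e ⟨w, -, -, -, -, rfl⟩
    exact integral_nonneg fun x => by positivity
  have hcap_le : ∀ t : ℝ, 0 < t → capRel n Ω {x | t ≤ u x}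
      ≤ (t ^ 4)⁻¹ * ∫ x, Set.indicator {y | u y < t}
          (fun y => 4 * u y ^ 2 * ‖fderiv ℝ u y‖ ^ 2) x := by
    intro t ht
    have ht2 : (0:ℝ) < t ^ 2 := by positivity
    have hlip : LipschitzWith (Real.toNNReal (2 / t) * K)
        (fun y => min (u y ^ 2 / t ^ 2) 1) := by
      apply LipschitzWith.of_dist_le_mul
      intro x y
      have hcoe : ((Real.toNNReal (2 / t) * K : NNReal) : ℝ) = 2 / t * (K : ℝ) := by
        rw [NNReal.coe_mul, Real.coe_toNNReal _ (by positivity)]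
      rw [hcoe, Real.dist_eq]
      calc |min (u x ^ 2 / t ^ 2) 1 - min (u y ^ 2 / t ^ 2) 1|
          ≤ 2 / t * |u x - u y| := min_lip_aux (hpos x) (hpos y) ht
        _ ≤ 2 / t * ((K : ℝ) * dist x y) := by
            apply mul_le_mul_of_nonneg_left _ (by positivity)
            rw [← Real.dist_eq]
            exact hu.dist_le_mul x y
        _ = 2 / t * (K : ℝ) * dist x y := by ring
    have hsubsupp : Function.support (fun y => min (u y ^ 2 / t ^ 2) 1)
        ⊆ Function.support u := by
      intro x hx
      simp only [Function.mem_support] at hx ⊢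
      intro h
      apply hx
      rw [h]
      norm_num
    have hcsv : HasCompactSupport (fun y => min (u y ^ 2 / t ^ 2) 1) := hcs.mono hsubsupp
    have htsv : tsupport (fun y => min (u y ^ 2 / t ^ 2) 1) ⊆ Ω :=
      (closure_mono hsubsupp).trans hsupp
    have hone : ∀ x ∈ {x | t ≤ u x}, (fun y => min (u y ^ 2 / t ^ 2) 1) x = 1 := by
      intro x hx
      have hx' : t ≤ u x := hx
      simp only
      exact min_eq_right ((one_le_div ht2).mpr (by nlinarith))
    have hle1 : capRel n Ω {x | t ≤ u x}
        ≤ ∫ x, ‖fderiv ℝ (fun y => min (u y ^ 2 / t ^ 2) 1) x‖ ^ 2 := by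
      apply csInf_le
      · refine ⟨0, ?_⟩
        rintro e ⟨w, -, -, -, -, rfl⟩
        exact integral_nonneg fun x => by positivity
      · exact ⟨_, ⟨_, hlip⟩, hcsv, htsv, hone, rfl⟩
    have hswap : (fun x => Set.indicator {y | u y < t}
          (fun y => (2 * u y / t ^ 2) ^ 2 * ‖fderiv ℝ u y‖ ^ 2) x)
        = fun x => (t ^ 4)⁻¹ * Set.indicator {y | u y < t}
          (fun y => 4 * u y ^ 2 * ‖fderiv ℝ u y‖ ^ 2) x := by
      funext x
      by_cases hx : u x < t
      · rw [Set.indicator_of_mem (show x ∈ {y | u y < t} from hx),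
          Set.indicator_of_mem (show x ∈ {y | u y < t} from hx)]
        field_simp
        ring
      · rw [Set.indicator_of_notMem (show x ∉ {y | u y < t} from hx),
          Set.indicator_of_notMem (show x ∉ {y | u y < t} from hx), mul_zero]
    have hmaj_int : Integrable (fun x => Set.indicator {y | u y < t}
        (fun y => (2 * u y / t ^ 2) ^ 2 * ‖fderiv ℝ u y‖ ^ 2) x) := by
      rw [hswap]
      exact (hW_int.indicator (hsetS t)).const_mul _
    have hle2 : ∫ x, ‖fderiv ℝ (fun y => min (u y ^ 2 / t ^ 2) 1) x‖ ^ 2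
        ≤ ∫ x, Set.indicator {y | u y < t}
            (fun y => (2 * u y / t ^ 2) ^ 2 * ‖fderiv ℝ u y‖ ^ 2) x :=
      integral_mono_of_nonneg (Filter.Eventually.of_forall fun x => by positivity)
        hmaj_int (Filter.Eventually.of_forall (fderiv_vt_bound hcont hpos ht))
    calc capRel n Ω {x | t ≤ u x}
        ≤ ∫ x, ‖fderiv ℝ (fun y => min (u y ^ 2 / t ^ 2) 1) x‖ ^ 2 := hle1
      _ ≤ ∫ x, Set.indicator {y | u y < t}
            (fun y => (2 * u y / t ^ 2) ^ 2 * ‖fderiv ℝ u y‖ ^ 2) x := hle2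
      _ = (t ^ 4)⁻¹ * ∫ x, Set.indicator {y | u y < t}
            (fun y => 4 * u y ^ 2 * ‖fderiv ℝ u y‖ ^ 2) x := by
          rw [hswap]
          exact integral_const_mul _ _
  -- the auxiliary function G and majorant g
  have hGint : ∀ t : ℝ, Integrable (Set.indicator {y | u y < t}
      (fun y => 4 * u y ^ 2 * ‖fderiv ℝ u y‖ ^ 2)) := fun t => hW_int.indicator (hsetS t)
  have hGnonneg : ∀ t : ℝ, 0 ≤ ∫ x, Set.indicator {y | u y < t}
      (fun y => 4 * u y ^ 2 * ‖fderiv ℝ u y‖ ^ 2) x := fun t =>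
    integral_nonneg fun x => Set.indicator_nonneg (fun y _ => hW_nonneg y) x
  have hGmono : Monotone fun t => ∫ x, Set.indicator {y | u y < t}
      (fun y => 4 * u y ^ 2 * ‖fderiv ℝ u y‖ ^ 2) x := by
    intro s t hst
    apply integral_mono (hGint s) (hGint t)
    intro x
    exact Set.indicator_le_indicator_of_subset
      (fun y hy => lt_of_lt_of_le hy hst) (fun y => hW_nonneg y) x
  have hGmeas : Measurable fun t => ∫ x, Set.indicator {y | u y < t}
      (fun y => 4 * u y ^ 2 * ‖fderiv ℝ u y‖ ^ 2) x := hGmono.measurable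
  have hgmeas : Measurable fun t => 2 / t ^ 3 * ∫ x, Set.indicator {y | u y < t}
      (fun y => 4 * u y ^ 2 * ‖fderiv ℝ u y‖ ^ 2) x :=
    (measurable_const.div (measurable_id.pow_const 3)).mul hGmeas
  -- pointwise domination on (0,∞)
  have hdom : ∀ t ∈ Set.Ioi (0:ℝ), 2 * t * capRel n Ω {x | t ≤ u x}
      ≤ 2 / t ^ 3 * ∫ x, Set.indicator {y | u y < t}
          (fun y => 4 * u y ^ 2 * ‖fderiv ℝ u y‖ ^ 2) x := by
    intro t ht
    have ht' : (0:ℝ) < t := ht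
    have h2 := mul_le_mul_of_nonneg_left (hcap_le t ht')
      (mul_nonneg (by norm_num) ht'.le : (0:ℝ) ≤ 2 * t)
    have h3 : 2 * t * ((t ^ 4)⁻¹ * ∫ x, Set.indicator {y | u y < t}
          (fun y => 4 * u y ^ 2 * ‖fderiv ℝ u y‖ ^ 2) x)
        = 2 / t ^ 3 * ∫ x, Set.indicator {y | u y < t}
          (fun y => 4 * u y ^ 2 * ‖fderiv ℝ u y‖ ^ 2) x := by
      field_simp
    linarith
  -- ENNReal-valued computation
  have hW'meas : Measurable fun x => ENNReal.ofReal (4 * u x ^ 2 * ‖fderiv ℝ u x‖ ^ 2) :=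
    hWmeas.ennreal_ofReal
  have hofg : ∀ t ∈ Set.Ioi (0:ℝ),
      ENNReal.ofReal (2 / t ^ 3 * ∫ x, Set.indicator {y | u y < t}
          (fun y => 4 * u y ^ 2 * ‖fderiv ℝ u y‖ ^ 2) x)
      = ∫⁻ x, ENNReal.ofReal (2 / t ^ 3) * Set.indicator {y | u y < t}
          (fun y => ENNReal.ofReal (4 * u y ^ 2 * ‖fderiv ℝ u y‖ ^ 2)) x := by
    intro t ht
    have ht' : (0:ℝ) < t := ht
    rw [ENNReal.ofReal_mul (by positivity)]
    rw [ofReal_integral_eq_lintegral_ofReal (hGint t)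
      (Filter.Eventually.of_forall fun x => Set.indicator_nonneg (fun y _ => hW_nonneg y) x)]
    rw [lintegral_const_mul _ (hW'meas.indicator (hsetS t))]
    congr 1
    apply lintegral_congr
    intro x
    simp only [Set.indicator_apply]
    split_ifs <;> simp
  have hswapmeas : AEMeasurable (Function.uncurry fun (t : ℝ) (x : Fin n → ℝ) =>
      ENNReal.ofReal (2 / t ^ 3) * Set.indicator {y | u y < t}
        (fun y => ENNReal.ofReal (4 * u y ^ 2 * ‖fderiv ℝ u y‖ ^ 2)) x)
      ((volume.restrict (Set.Ioi (0:ℝ))).prod volume) := by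
    apply Measurable.aemeasurable
    have hset2 : MeasurableSet {p : ℝ × (Fin n → ℝ) | u p.2 < p.1} :=
      measurableSet_lt (hcont.measurable.comp measurable_snd) measurable_fst
    have heq : (Function.uncurry fun (t : ℝ) (x : Fin n → ℝ) =>
        ENNReal.ofReal (2 / t ^ 3) * Set.indicator {y | u y < t}
          (fun y => ENNReal.ofReal (4 * u y ^ 2 * ‖fderiv ℝ u y‖ ^ 2)) x)
        = fun p : ℝ × (Fin n → ℝ) => ENNReal.ofReal (2 / p.1 ^ 3) *
            Set.indicator {q : ℝ × (Fin n → ℝ) | u q.2 < q.1}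
              (fun q => ENNReal.ofReal (4 * u q.2 ^ 2 * ‖fderiv ℝ u q.2‖ ^ 2)) p := by
      funext p
      simp only [Function.uncurry, Set.indicator_apply, Set.mem_setOf_eq]
    rw [heq]
    exact ((measurable_const.div (measurable_fst.pow_const 3)).ennreal_ofReal).mul
      (((hWmeas.comp measurable_snd).ennreal_ofReal).indicator hset2)
  have hL : ∫⁻ t in Set.Ioi (0:ℝ), ENNReal.ofReal (2 / t ^ 3 * ∫ x,
        Set.indicator {y | u y < t} (fun y => 4 * u y ^ 2 * ‖fderiv ℝ u y‖ ^ 2) x)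
      = ∫⁻ x, ∫⁻ t in Set.Ioi (0:ℝ), ENNReal.ofReal (2 / t ^ 3) *
          Set.indicator {y | u y < t}
            (fun y => ENNReal.ofReal (4 * u y ^ 2 * ‖fderiv ℝ u y‖ ^ 2)) x := by
    rw [setLIntegral_congr_fun measurableSet_Ioi hofg]
    exact lintegral_lintegral_swap hswapmeas
  -- inner integral
  have hinner : ∀ x, (∫⁻ t in Set.Ioi (0:ℝ), ENNReal.ofReal (2 / t ^ 3) *
        Set.indicator {y | u y < t}
          (fun y => ENNReal.ofReal (4 * u y ^ 2 * ‖fderiv ℝ u y‖ ^ 2)) x)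
      = Set.indicator (Function.support u)
          (fun x => ENNReal.ofReal (4 * ‖fderiv ℝ u x‖ ^ 2)) x := by
    intro x
    have hrw : ∀ t : ℝ, ENNReal.ofReal (2 / t ^ 3) * Set.indicator {y | u y < t}
          (fun y => ENNReal.ofReal (4 * u y ^ 2 * ‖fderiv ℝ u y‖ ^ 2)) x
        = Set.indicator (Set.Ioi (u x)) (fun s => ENNReal.ofReal (2 / s ^ 3) *
            ENNReal.ofReal (4 * u x ^ 2 * ‖fderiv ℝ u x‖ ^ 2)) t := by
      intro t
      simp only [Set.indicator_apply, Set.mem_setOf_eq, Set.mem_Ioi]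
      by_cases h : u x < t
      · simp [h]
      · simp [h]
    rw [lintegral_congr hrw]
    rw [lintegral_indicator measurableSet_Ioi]
    rw [Measure.restrict_restrict measurableSet_Ioi]
    rw [Set.Ioi_inter_Ioi, sup_eq_left.mpr (hpos x)]
    have hphimeas : Measurable fun s : ℝ => ENNReal.ofReal (2 / s ^ 3) :=
      (measurable_const.div (measurable_id.pow_const 3)).ennreal_ofReal
    rw [lintegral_mul_const _ hphimeas]
    by_cases hx : u x = 0
    · have hW0 : ENNReal.ofReal (4 * u x ^ 2 * ‖fderiv ℝ u x‖ ^ 2) = 0 := by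
        rw [hx]; simp
      rw [hW0, mul_zero, Set.indicator_of_notMem (by simp [Function.mem_support, hx])]
    · have hxpos : 0 < u x := lt_of_le_of_ne (hpos x) (Ne.symm hx)
      rw [lintegral_Ioi_ofReal_two_div_cube hxpos]
      rw [Set.indicator_of_mem (by simp [Function.mem_support, hx])]
      rw [← ENNReal.ofReal_mul (by positivity)]
      congr 1
      field_simp
  have hsuppΩ : Function.support u ⊆ Ω := (subset_tsupport u).trans hsupp
  have hsuppmeas : MeasurableSet (Function.support u) := by
    have : IsOpen (Function.support u) := by
      rw [Function.support_eq_preimage]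
      exact (isOpen_compl_singleton).preimage hcont
    exact this.measurableSet
  have hL2 : ∫⁻ t in Set.Ioi (0:ℝ), ENNReal.ofReal (2 / t ^ 3 * ∫ x,
        Set.indicator {y | u y < t} (fun y => 4 * u y ^ 2 * ‖fderiv ℝ u y‖ ^ 2) x)
      ≤ ENNReal.ofReal (4 * ∫ x in Ω, ‖fderiv ℝ u x‖ ^ 2) := by
    rw [hL, lintegral_congr hinner, lintegral_indicator hsuppmeas]
    calc ∫⁻ x in Function.support u, ENNReal.ofReal (4 * ‖fderiv ℝ u x‖ ^ 2)
        ≤ ∫⁻ x in Ω, ENNReal.ofReal (4 * ‖fderiv ℝ u x‖ ^ 2) := lintegral_mono_set hsuppΩ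
      _ = ENNReal.ofReal (∫ x in Ω, 4 * ‖fderiv ℝ u x‖ ^ 2) :=
          (ofReal_integral_eq_lintegral_ofReal ((hE_int.const_mul 4).integrableOn)
            (Filter.Eventually.of_forall fun x => by positivity)).symm
      _ = ENNReal.ofReal (4 * ∫ x in Ω, ‖fderiv ℝ u x‖ ^ 2) := by
          rw [integral_const_mul]
  have hg_nonneg : 0 ≤ᵐ[volume.restrict (Set.Ioi (0:ℝ))] fun t => 2 / t ^ 3 * ∫ x,
      Set.indicator {y | u y < t} (fun y => 4 * u y ^ 2 * ‖fderiv ℝ u y‖ ^ 2) x :=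
    (ae_restrict_iff' measurableSet_Ioi).mpr (Filter.Eventually.of_forall fun t ht =>
      mul_nonneg (div_nonneg (by norm_num) (pow_nonneg (le_of_lt ht) 3)) (hGnonneg t))
  have hg_int : Integrable (fun t => 2 / t ^ 3 * ∫ x,
      Set.indicator {y | u y < t} (fun y => 4 * u y ^ 2 * ‖fderiv ℝ u y‖ ^ 2) x)
      (volume.restrict (Set.Ioi (0:ℝ))) := by
    refine ⟨hgmeas.aestronglyMeasurable, ?_⟩
    rw [hasFiniteIntegral_iff_ofReal hg_nonneg]
    exact lt_of_le_of_lt hL2 ENNReal.ofReal_lt_top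
  have hf_nonneg : 0 ≤ᵐ[volume.restrict (Set.Ioi (0:ℝ))]
      fun t => 2 * t * capRel n Ω {x | t ≤ u x} :=
    (ae_restrict_iff' measurableSet_Ioi).mpr (Filter.Eventually.of_forall fun t ht =>
      mul_nonneg (mul_nonneg (by norm_num) (le_of_lt ht)) (hcap_nonneg _))
  have h1 : ∫ t in Set.Ioi (0:ℝ), 2 * t * capRel n Ω {x | t ≤ u x}
      ≤ ∫ t in Set.Ioi (0:ℝ), 2 / t ^ 3 * ∫ x,
          Set.indicator {y | u y < t} (fun y => 4 * u y ^ 2 * ‖fderiv ℝ u y‖ ^ 2) x :=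
    integral_mono_of_nonneg hf_nonneg hg_int
      ((ae_restrict_iff' measurableSet_Ioi).mpr (Filter.Eventually.of_forall hdom))
  have h2 : ∫ t in Set.Ioi (0:ℝ), 2 / t ^ 3 * ∫ x,
        Set.indicator {y | u y < t} (fun y => 4 * u y ^ 2 * ‖fderiv ℝ u y‖ ^ 2) x
      ≤ 4 * ∫ x in Ω, ‖fderiv ℝ u x‖ ^ 2 := by
    rw [integral_eq_lintegral_of_nonneg_ae hg_nonneg hgmeas.aestronglyMeasurable]
    have hnn : 0 ≤ 4 * ∫ x in Ω, ‖fderiv ℝ u x‖ ^ 2 :=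
      mul_nonneg (by norm_num)
        (setIntegral_nonneg hΩ.measurableSet fun x _ => by positivity)
    calc ENNReal.toReal (∫⁻ t in Set.Ioi (0:ℝ), ENNReal.ofReal (2 / t ^ 3 * ∫ x,
            Set.indicator {y | u y < t} (fun y => 4 * u y ^ 2 * ‖fderiv ℝ u y‖ ^ 2) x))
        ≤ ENNReal.toReal (ENNReal.ofReal (4 * ∫ x in Ω, ‖fderiv ℝ u x‖ ^ 2)) :=
          ENNReal.toReal_mono ENNReal.ofReal_ne_top hL2
      _ = 4 * ∫ x in Ω, ‖fderiv ℝ u x‖ ^ 2 := ENNReal.toReal_ofReal hnn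
  exact h1.trans h2
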